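/- Fix a ≥ 1, set ω₀ = √3·(√a − 1/√a), and let ω(k) = (ω₀² + 2·Σ_{j=1}^{3}(1 − cos(2πk^j)))^{1/2} be the nearest-neighbor dispersion relation. Then for all k, q ∈ ℝ³ one has the Lipschitz-type bound |ω(k + q) − ω(k)| ≤ a^{−1/2}·(2·Σ_{j=1}^{3}(1 − cos(2πq^j)))^{1/2}. -/

import Mathlib

open Real

/-- The nearest-neighbor dispersion relation on `ℤ³` with on-site frequency `ω₀`. -/
noncomputable def nnDispersion (ω₀ : ℝ) (k : Fin 3 → ℝ) : ℝ :=
  Real.sqrt (ω₀ ^ 2 + 2 * ∑ j : Fin 3, (1 - Real.cos (2 * π * k j)))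

private lemma cos_expand (x y : ℝ) :
    Real.cos x = Real.cos (x + y/2) * Real.cos (y/2) + Real.sin (x + y/2) * Real.sin (y/2) ∧
    Real.cos (x + y) = Real.cos (x + y/2) * Real.cos (y/2) - Real.sin (x + y/2) * Real.sin (y/2) := by
  constructor
  · rw [← Real.cos_sub]; ring_nf
  · rw [← Real.cos_add]; ring_nf

private lemma half_angle (y : ℝ) : 1 - Real.cos y = 2 * Real.sin (y/2) ^ 2 := by
  have h := Real.cos_two_mul (y/2)
  have h2 : 2 * (y/2) = y := by ring
  have h3 := Real.sin_sq_add_cos_sq (y/2)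
  rw [h2] at h
  nlinarith

private lemma key_ineq (a x y : ℝ) :
    a^2 * Real.sin (x + y/2)^2 + (1 - Real.cos y)/2 ≤
      (a-1)^2 + a*(1 - Real.cos x) + a*(1 - Real.cos (x+y)) := by
  obtain ⟨e1, e2⟩ := cos_expand x y
  have e3 := half_angle y
  have e4 := Real.sin_sq_add_cos_sq (x + y/2)
  have e5 := Real.sin_sq_add_cos_sq (y/2)
  nlinarith [sq_nonneg (a * Real.cos (x + y/2) - Real.cos (y/2))]

set_option maxHeartbeats 1000000 in
private lemma main_est (a w : ℝ) (ha : 1 ≤ a) (hw : a * w = 3*(a-1)^2) (hw0 : 0 ≤ w)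
    (x0 x1 x2 y0 y1 y2 : ℝ) :
    |Real.sqrt (w + 2*((1 - Real.cos (x0+y0)) + (1 - Real.cos (x1+y1)) + (1 - Real.cos (x2+y2)))) -
      Real.sqrt (w + 2*((1 - Real.cos x0) + (1 - Real.cos x1) + (1 - Real.cos x2)))| ≤
      (Real.sqrt a)⁻¹ *
        Real.sqrt (2*((1 - Real.cos y0) + (1 - Real.cos y1) + (1 - Real.cos y2))) := by
  have ha0 : (0:ℝ) < a := by linarith
  obtain ⟨A, hA⟩ : ∃ t, t = w + 2*((1 - Real.cos (x0+y0)) + (1 - Real.cos (x1+y1)) + (1 - Real.cos (x2+y2))) := ⟨_, rfl⟩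
  obtain ⟨B, hB⟩ : ∃ t, t = w + 2*((1 - Real.cos x0) + (1 - Real.cos x1) + (1 - Real.cos x2)) := ⟨_, rfl⟩
  obtain ⟨F, hF⟩ : ∃ t, t = 2*((1 - Real.cos y0) + (1 - Real.cos y1) + (1 - Real.cos y2)) := ⟨_, rfl⟩
  rw [← hA, ← hB, ← hF]
  have hA0 : 0 ≤ A := by
    rw [hA]
    nlinarith [Real.cos_le_one (x0+y0), Real.cos_le_one (x1+y1), Real.cos_le_one (x2+y2)]
  have hB0 : 0 ≤ B := by
    rw [hB]; nlinarith [Real.cos_le_one x0, Real.cos_le_one x1, Real.cos_le_one x2]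
  have hF0 : 0 ≤ F := by
    rw [hF]; nlinarith [Real.cos_le_one y0, Real.cos_le_one y1, Real.cos_le_one y2]
  have hF4 : F = 4*(Real.sin (y0/2)^2 + Real.sin (y1/2)^2 + Real.sin (y2/2)^2) := by
    rw [hF, half_angle y0, half_angle y1, half_angle y2]; ring
  have hΔ : A - B = 4*(Real.sin (x0+y0/2) * Real.sin (y0/2) + Real.sin (x1+y1/2) * Real.sin (y1/2)
      + Real.sin (x2+y2/2) * Real.sin (y2/2)) := by
    obtain ⟨a0, b0⟩ := cos_expand x0 y0
    obtain ⟨a1, b1⟩ := cos_expand x1 y1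
    obtain ⟨a2, b2⟩ := cos_expand x2 y2
    rw [hA, hB, a0, b0, a1, b1, a2, b2]; ring
  have hCS : (A - B)^2 ≤
      4*(Real.sin (x0+y0/2)^2 + Real.sin (x1+y1/2)^2 + Real.sin (x2+y2/2)^2)*F := by
    rw [hΔ, hF4]
    nlinarith [sq_nonneg (Real.sin (x0+y0/2)*Real.sin (y1/2) - Real.sin (x1+y1/2)*Real.sin (y0/2)),
      sq_nonneg (Real.sin (x0+y0/2)*Real.sin (y2/2) - Real.sin (x2+y2/2)*Real.sin (y0/2)),
      sq_nonneg (Real.sin (x1+y1/2)*Real.sin (y2/2) - Real.sin (x2+y2/2)*Real.sin (y1/2))]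
  have hsum : 4*a^2*(Real.sin (x0+y0/2)^2 + Real.sin (x1+y1/2)^2 + Real.sin (x2+y2/2)^2) ≤
      2*a*(A+B) - F := by
    have k0 := key_ineq a x0 y0
    have k1 := key_ineq a x1 y1
    have k2 := key_ineq a x2 y2
    rw [hA, hB, hF]
    nlinarith [k0, k1, k2, hw]
  have h5 : a^2*(A-B)^2 ≤ F*(2*a*(A+B) - F) := by
    have t1 : a^2*((A-B)^2) ≤
        a^2*(4*(Real.sin (x0+y0/2)^2 + Real.sin (x1+y1/2)^2 + Real.sin (x2+y2/2)^2)*F) :=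
      mul_le_mul_of_nonneg_left hCS (sq_nonneg a)
    have t2 : F*(4*a^2*(Real.sin (x0+y0/2)^2 + Real.sin (x1+y1/2)^2 + Real.sin (x2+y2/2)^2)) ≤
        F*(2*a*(A+B) - F) := mul_le_mul_of_nonneg_left hsum hF0
    nlinarith [t1, t2]
  have hsA : Real.sqrt A ^ 2 = A := Real.sq_sqrt hA0
  have hsB : Real.sqrt B ^ 2 = B := Real.sq_sqrt hB0
  have hR0 : 0 ≤ 2*a*(Real.sqrt A * Real.sqrt B) := by positivity
  have h6 : (a*(A+B) - F)^2 ≤ (2*a*(Real.sqrt A * Real.sqrt B))^2 := by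
    have hX : (2*a*(Real.sqrt A * Real.sqrt B))^2 = 4*a^2*(A*B) := by
      rw [mul_pow, mul_pow, mul_pow, hsA, hsB]; ring
    rw [hX]; nlinarith [h5]
  have h7 : a*(A+B) - F ≤ 2*a*(Real.sqrt A * Real.sqrt B) := by nlinarith [h6, hR0]
  have h8 : (Real.sqrt A - Real.sqrt B)^2 ≤ F/a := by
    have hexp : (Real.sqrt A - Real.sqrt B)^2 = A + B - 2*(Real.sqrt A * Real.sqrt B) := by
      rw [sub_sq, hsA, hsB]; ring
    rw [hexp, le_div_iff₀ ha0]
    nlinarith [h7]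
  calc |Real.sqrt A - Real.sqrt B| = Real.sqrt ((Real.sqrt A - Real.sqrt B)^2) :=
        (Real.sqrt_sq_eq_abs _).symm
    _ ≤ Real.sqrt (F/a) := Real.sqrt_le_sqrt h8
    _ = (Real.sqrt a)⁻¹ * Real.sqrt F := by
        rw [Real.sqrt_div hF0]; ring

/-- Lipschitz-type bound for the nearest-neighbor dispersion relation with
`ω₀ = √3·(√a − 1/√a)`: `|ω(k+q) − ω(k)| ≤ a^{−1/2}·(2·Σⱼ(1−cos 2πqʲ))^{1/2}`. -/
theorem nnDispersion_lipschitz_bound (a : ℝ) (ha : 1 ≤ a) (k q : Fin 3 → ℝ) :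
    |nnDispersion (Real.sqrt 3 * (Real.sqrt a - 1 / Real.sqrt a)) (k + q) -
        nnDispersion (Real.sqrt 3 * (Real.sqrt a - 1 / Real.sqrt a)) k| ≤
      (Real.sqrt a)⁻¹ * Real.sqrt (2 * ∑ j : Fin 3, (1 - Real.cos (2 * π * q j))) := by
  have ha0 : (0:ℝ) < a := by linarith
  have hs2 : Real.sqrt a ^ 2 = a := Real.sq_sqrt ha0.le
  have hs0 : 0 < Real.sqrt a := Real.sqrt_pos.mpr ha0
  have h3 : Real.sqrt 3 ^ 2 = 3 := Real.sq_sqrt (by norm_num)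
  have hss : Real.sqrt a * (Real.sqrt a - 1/Real.sqrt a) = a - 1 := by
    field_simp
    linarith [hs2]
  have hw : a * (Real.sqrt 3 * (Real.sqrt a - 1 / Real.sqrt a))^2 = 3*(a-1)^2 := by
    have h : a * (Real.sqrt 3 * (Real.sqrt a - 1/Real.sqrt a))^2 =
        3 * (Real.sqrt a * (Real.sqrt a - 1/Real.sqrt a))^2 := by
      linear_combination ((Real.sqrt a - 1/Real.sqrt a)^2 * a) * h3
        - (3*(Real.sqrt a - 1/Real.sqrt a)^2) * hs2
    rw [h, hss]
  have hrw : ∀ j : Fin 3, (2:ℝ) * π * ((k + q) j) = 2*π*k j + 2*π*q j := by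
    intro j; simp only [Pi.add_apply]; ring
  simp only [nnDispersion, hrw, Fin.sum_univ_three]
  exact main_est a _ ha hw (sq_nonneg _) (2*π*k 0) (2*π*k 1) (2*π*k 2) (2*π*q 0) (2*π*q 1) (2*π*q 2)
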